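/- For real parameters V₀, V₁ and k₁, k₂, consider the 2×2 real symmetric matrix H(k) = [[V₀, c],[c, V₁]] with c = 2cos k₁ + 2cos k₂. Its eigenvalues are (V₀+V₁)/2 ± sqrt((V₀−V₁)²/4 + c²). As (k₁,k₂) ranges over ℝ², the set of all eigenvalues equals the union of the two closed intervals [ (V₀+V₁)/2 − sqrt((V₀−V₁)²/4 + 16), min{V₀,V₁} ] and [ max{V₀,V₁}, (V₀+V₁)/2 + sqrt((V₀−V₁)²/4 + 16) ]. -/

import Mathlib

open Real

lemma det_aux (V₀ V₁ c lam : ℝ) :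
    Matrix.det (!![V₀, c; c, V₁] - lam • (1 : Matrix (Fin 2) (Fin 2) ℝ)) = 0 ↔
      lam = (V₀ + V₁) / 2 + Real.sqrt ((V₀ - V₁) ^ 2 / 4 + c ^ 2) ∨
      lam = (V₀ + V₁) / 2 - Real.sqrt ((V₀ - V₁) ^ 2 / 4 + c ^ 2) := by
  set s := Real.sqrt ((V₀ - V₁) ^ 2 / 4 + c ^ 2) with hs
  have hsn : 0 ≤ s := Real.sqrt_nonneg _
  have hs2 : s ^ 2 = (V₀ - V₁) ^ 2 / 4 + c ^ 2 := Real.sq_sqrt (by positivity)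
  have hdet : Matrix.det (!![V₀, c; c, V₁] - lam • (1 : Matrix (Fin 2) (Fin 2) ℝ))
      = (V₀ - lam) * (V₁ - lam) - c * c := by
    simp [Matrix.det_fin_two, Matrix.sub_apply, Matrix.smul_apply, Matrix.one_apply]
  rw [hdet]
  constructor
  · intro h
    have h2 : (lam - ((V₀ + V₁) / 2 + s)) * (lam - ((V₀ + V₁) / 2 - s)) = 0 := by nlinarith
    rcases mul_eq_zero.mp h2 with h' | h'
    · left; linarith
    · right; linarith
  · rintro (h | h) <;> nlinarith

lemma exists_c (t : ℝ) (h0 : 0 ≤ t) (h16 : t ≤ 16) :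
    ∃ k₁ k₂ : ℝ, (2 * cos k₁ + 2 * cos k₂) ^ 2 = t := by
  have hc0 : 0 ≤ Real.sqrt t := Real.sqrt_nonneg t
  have hc4 : Real.sqrt t ≤ 4 := by
    have := Real.sqrt_le_sqrt h16
    simpa using this.trans_eq (by
      rw [show (16:ℝ) = 4 ^ 2 by norm_num, Real.sqrt_sq (by norm_num : (0:ℝ) ≤ 4)])
  refine ⟨Real.arccos (Real.sqrt t / 2 - 1), 0, ?_⟩
  rw [Real.cos_arccos (by linarith) (by linarith), Real.cos_zero]
  have : 2 * (Real.sqrt t / 2 - 1) + 2 * 1 = Real.sqrt t := by ring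
  rw [this, Real.sq_sqrt h0]

theorem stmt6 (V₀ V₁ : ℝ) :
    (∀ k₁ k₂ lam : ℝ,
      (Matrix.det
          (!![V₀, 2 * cos k₁ + 2 * cos k₂; 2 * cos k₁ + 2 * cos k₂, V₁]
            - lam • (1 : Matrix (Fin 2) (Fin 2) ℝ)) = 0 ↔
        lam = (V₀ + V₁) / 2 + Real.sqrt ((V₀ - V₁) ^ 2 / 4 + (2 * cos k₁ + 2 * cos k₂) ^ 2) ∨
        lam = (V₀ + V₁) / 2 - Real.sqrt ((V₀ - V₁) ^ 2 / 4 + (2 * cos k₁ + 2 * cos k₂) ^ 2))) ∧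
    {lam : ℝ | ∃ k₁ k₂ : ℝ,
        Matrix.det
          (!![V₀, 2 * cos k₁ + 2 * cos k₂; 2 * cos k₁ + 2 * cos k₂, V₁]
            - lam • (1 : Matrix (Fin 2) (Fin 2) ℝ)) = 0}
      = Set.Icc ((V₀ + V₁) / 2 - Real.sqrt ((V₀ - V₁) ^ 2 / 4 + 16)) (min V₀ V₁) ∪
        Set.Icc (max V₀ V₁) ((V₀ + V₁) / 2 + Real.sqrt ((V₀ - V₁) ^ 2 / 4 + 16)) := by
  have habs : Real.sqrt ((V₀ - V₁) ^ 2 / 4) = |V₀ - V₁| / 2 := by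
    rw [show (V₀ - V₁) ^ 2 / 4 = ((V₀ - V₁) / 2) ^ 2 by ring, Real.sqrt_sq_eq_abs,
      abs_div]
    norm_num
  set S := Real.sqrt ((V₀ - V₁) ^ 2 / 4 + 16) with hS
  have hS2 : S ^ 2 = (V₀ - V₁) ^ 2 / 4 + 16 := Real.sq_sqrt (by positivity)
  have hSn : 0 ≤ S := Real.sqrt_nonneg _
  have hmax : max V₀ V₁ = (V₀ + V₁) / 2 + |V₀ - V₁| / 2 := by
    rcases le_total V₀ V₁ with h | h
    · rw [max_eq_right h, abs_of_nonpos (by linarith)]; ring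
    · rw [max_eq_left h, abs_of_nonneg (by linarith)]; ring
  have hmin : min V₀ V₁ = (V₀ + V₁) / 2 - |V₀ - V₁| / 2 := by
    rcases le_total V₀ V₁ with h | h
    · rw [min_eq_left h, abs_of_nonpos (by linarith)]; ring
    · rw [min_eq_right h, abs_of_nonneg (by linarith)]; ring
  constructor
  · intro k₁ k₂ lam; exact det_aux V₀ V₁ _ lam
  · ext lam
    simp only [Set.mem_setOf_eq, Set.mem_union, Set.mem_Icc]
    constructor
    · rintro ⟨k₁, k₂, hdet⟩
      set c := 2 * cos k₁ + 2 * cos k₂ with hc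
      have hcb : c ^ 2 ≤ 16 := by
        have h1 := Real.neg_one_le_cos k₁
        have h2 := Real.cos_le_one k₁
        have h3 := Real.neg_one_le_cos k₂
        have h4 := Real.cos_le_one k₂
        nlinarith
      set s := Real.sqrt ((V₀ - V₁) ^ 2 / 4 + c ^ 2) with hs
      have hs2 : s ^ 2 = (V₀ - V₁) ^ 2 / 4 + c ^ 2 := Real.sq_sqrt (by positivity)
      have hsn : 0 ≤ s := Real.sqrt_nonneg _
      have hsl : |V₀ - V₁| / 2 ≤ s := by
        rw [← habs]; exact Real.sqrt_le_sqrt (by nlinarith)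
      have hsu : s ≤ S := Real.sqrt_le_sqrt (by linarith)
      rcases (det_aux V₀ V₁ c lam).mp hdet with h | h
      · right; rw [hmax]; constructor <;> linarith
      · left; rw [hmin]; constructor <;> linarith
    · rintro (⟨h1, h2⟩ | ⟨h1, h2⟩)
      · -- lower band: lam = m - s
        rw [hmin] at h2
        have habs2 : |V₀ - V₁| / 2 ≤ (V₀ + V₁) / 2 - lam := by linarith
        have hd : 0 ≤ |V₀ - V₁| / 2 := by positivity
        have ht0 : 0 ≤ ((V₀ + V₁) / 2 - lam) ^ 2 - (V₀ - V₁) ^ 2 / 4 := by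
          nlinarith [abs_nonneg (V₀ - V₁), sq_abs (V₀ - V₁)]
        have ht16 : ((V₀ + V₁) / 2 - lam) ^ 2 - (V₀ - V₁) ^ 2 / 4 ≤ 16 := by
          have : (V₀ + V₁) / 2 - lam ≤ S := by linarith
          nlinarith
        obtain ⟨k₁, k₂, hk⟩ := exists_c _ ht0 ht16
        refine ⟨k₁, k₂, (det_aux V₀ V₁ _ lam).mpr (Or.inr ?_)⟩
        rw [hk]
        have : (V₀ - V₁) ^ 2 / 4 + (((V₀ + V₁) / 2 - lam) ^ 2 - (V₀ - V₁) ^ 2 / 4)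
            = ((V₀ + V₁) / 2 - lam) ^ 2 := by ring
        rw [this, Real.sqrt_sq (by linarith)]
        ring
      · -- upper band: lam = m + s
        rw [hmax] at h1
        have habs2 : |V₀ - V₁| / 2 ≤ lam - (V₀ + V₁) / 2 := by linarith
        have ht0 : 0 ≤ (lam - (V₀ + V₁) / 2) ^ 2 - (V₀ - V₁) ^ 2 / 4 := by
          nlinarith [abs_nonneg (V₀ - V₁), sq_abs (V₀ - V₁)]
        have ht16 : (lam - (V₀ + V₁) / 2) ^ 2 - (V₀ - V₁) ^ 2 / 4 ≤ 16 := by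
          have h3 : lam - (V₀ + V₁) / 2 ≤ S := by linarith
          have h4 : 0 ≤ lam - (V₀ + V₁) / 2 := le_trans (by positivity) habs2
          nlinarith
        obtain ⟨k₁, k₂, hk⟩ := exists_c _ ht0 ht16
        refine ⟨k₁, k₂, (det_aux V₀ V₁ _ lam).mpr (Or.inl ?_)⟩
        rw [hk]
        have h4 : 0 ≤ lam - (V₀ + V₁) / 2 := le_trans (by positivity) habs2
        have : (V₀ - V₁) ^ 2 / 4 + ((lam - (V₀ + V₁) / 2) ^ 2 - (V₀ - V₁) ^ 2 / 4)
            = (lam - (V₀ + V₁) / 2) ^ 2 := by ring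
        rw [this, Real.sqrt_sq h4]
        ring
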